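/- Let K = ℚ(ζ₃) be the third cyclotomic field with ζ₃ a primitive third root of unity, and let E be the elliptic curve over K given by the short Weierstrass equation y² = x³ − (1296ζ₃ + 6480). Then the point (12(1 − ζ₃), −108ζ₃) lies on E and has order exactly 7. -/

import Mathlib

/-- The short Weierstrass curve y^2 = x^3 + Ax + B. -/
def Wshort {K : Type*} [CommRing K] (A B : K) : WeierstrassCurve.Affine K :=
  { a₁ := 0, a₂ := 0, a₃ := 0, a₄ := A, a₆ := B }

open WeierstrassCurve.Affine WeierstrassCurve.Affine.Point in
private lemma some_congr' {F : Type*} [Field F] {W : WeierstrassCurve.Affine F}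
    {x₁ y₁ x₂ y₂ : F} (h₁ : W.Nonsingular x₁ y₁) (h₂ : W.Nonsingular x₂ y₂)
    (hx : x₁ = x₂) (hy : y₁ = y₂) :
    (Point.some _ _ h₁ : W.Point) = Point.some _ _ h₂ := by
  subst hx; subst hy; rfl

open Classical in
theorem stmt_11 (ζ : CyclotomicField 3 ℚ) (hζ : IsPrimitiveRoot ζ 3) :
    ∃ h : (Wshort 0 (-(1296 * ζ + 6480))).Nonsingular (12 * (1 - ζ)) (-108 * ζ),
      addOrderOf (WeierstrassCurve.Affine.Point.some _ _ h) = 7 := by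
  classical
  have h3 : ζ ^ 3 = 1 := hζ.pow_eq_one
  have hne1 : ζ ≠ 1 := hζ.ne_one (by norm_num)
  have hrel : ζ ^ 2 + ζ + 1 = 0 := by
    have hmul : (ζ - 1) * (ζ ^ 2 + ζ + 1) = 0 := by linear_combination h3
    rcases mul_eq_zero.mp hmul with h | h
    · exact absurd (sub_eq_zero.mp h) hne1
    · exact h
  have hζ0 : ζ ≠ 0 := hζ.ne_zero (by norm_num)
  set W : WeierstrassCurve.Affine (CyclotomicField 3 ℚ) := Wshort 0 (-(1296 * ζ + 6480)) with hW
  -- discriminant nonzero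
  have hB : (1296 : CyclotomicField 3 ℚ) * ζ + 6480 ≠ 0 := by
    intro h
    have : ζ = -5 := by linear_combination h / 1296
    rw [this] at hrel; norm_num at hrel
  have hΔ : W.Δ ≠ 0 := by
    have : W.Δ = -432 * (1296 * ζ + 6480) ^ 2 := by
      simp [hW, Wshort, WeierstrassCurve.Δ, WeierstrassCurve.b₂, WeierstrassCurve.b₄,
        WeierstrassCurve.b₆, WeierstrassCurve.b₈]
      ring
    rw [this]
    intro h
    rcases mul_eq_zero.mp h with h | h
    · norm_num at h
    · exact hB ((pow_eq_zero_iff two_ne_zero).mp h)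
  have hns : ∀ x y : CyclotomicField 3 ℚ, W.Equation x y → W.Nonsingular x y := fun x y h =>
    (WeierstrassCurve.Affine.equation_iff_nonsingular_of_Δ_ne_zero (W := W) hΔ).mp h
  have heq : ∀ x y : CyclotomicField 3 ℚ, y ^ 2 = x ^ 3 + (-(1296 * ζ + 6480)) → W.Equation x y := by
    intro x y h
    rw [hW, WeierstrassCurve.Affine.equation_iff]
    simp [Wshort]
    linear_combination h
  -- the four points
  have h1 : W.Nonsingular (12 * (1 - ζ)) (-108 * ζ) := by
    refine hns _ _ (heq _ _ ?_)
    linear_combination (1728 * ζ + 4752) * hrel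
  have h2 : W.Nonsingular (12 + 24 * ζ) (-108 * ζ) := by
    refine hns _ _ (heq _ _ ?_)
    linear_combination (-13824 * ζ + 4752) * hrel
  have h3' : W.Nonsingular (-24 - 12 * ζ) (108 * ζ) := by
    refine hns _ _ (heq _ _ ?_)
    linear_combination (1728 * ζ + 20304) * hrel
  have h4 : W.Nonsingular (-24 - 12 * ζ) (-108 * ζ) := by
    refine hns _ _ (heq _ _ ?_)
    linear_combination (1728 * ζ + 20304) * hrel
  refine ⟨h1, ?_⟩
  set P : W.Point := WeierstrassCurve.Affine.Point.some _ _ h1 with hP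
  set Q2 : W.Point := WeierstrassCurve.Affine.Point.some _ _ h2 with hQ2
  set Q3 : W.Point := WeierstrassCurve.Affine.Point.some _ _ h3' with hQ3
  set Q4 : W.Point := WeierstrassCurve.Affine.Point.some _ _ h4 with hQ4
  -- doubling: P + P = Q2
  have hyne : (-108 * ζ : CyclotomicField 3 ℚ) ≠ W.negY (12 * (1 - ζ)) (-108 * ζ) := by
    simp only [hW, Wshort, WeierstrassCurve.Affine.negY]
    intro h
    apply hζ0
    linear_combination -h / 216
  have hsl2 : W.slope (12 * (1 - ζ)) (12 * (1 - ζ)) (-108 * ζ) (-108 * ζ) = 6 := by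
    rw [WeierstrassCurve.Affine.slope_of_Y_ne rfl hyne]
    simp only [hW, Wshort, WeierstrassCurve.Affine.negY]
    rw [div_eq_iff (by intro h; apply hζ0; linear_combination -h / 216)]
    linear_combination 432 * hrel
  have e2 : P + P = Q2 := by
    rw [hP, hQ2, WeierstrassCurve.Affine.Point.add_self_of_Y_ne hyne]
    refine some_congr' _ _ ?_ ?_
    · rw [WeierstrassCurve.Affine.addX, hsl2]
      simp only [hW, Wshort]; ring
    · rw [WeierstrassCurve.Affine.addY, WeierstrassCurve.Affine.negAddY,
        WeierstrassCurve.Affine.negY, WeierstrassCurve.Affine.addX, hsl2]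
      simp only [hW, Wshort]; ring
  -- Q2 + P = Q3
  have hxne21 : (12 + 24 * ζ : CyclotomicField 3 ℚ) ≠ 12 * (1 - ζ) := by
    intro h
    apply hζ0
    linear_combination h / 36
  have hsl3 : W.slope (12 + 24 * ζ) (12 * (1 - ζ)) (-108 * ζ) (-108 * ζ) = 0 := by
    rw [WeierstrassCurve.Affine.slope_of_X_ne hxne21]
    simp
  have e3 : Q2 + P = Q3 := by
    rw [hP, hQ2, hQ3, WeierstrassCurve.Affine.Point.add_of_X_ne hxne21]
    refine some_congr' _ _ ?_ ?_
    · rw [WeierstrassCurve.Affine.addX, hsl3]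
      simp only [hW, Wshort]; ring
    · rw [WeierstrassCurve.Affine.addY, WeierstrassCurve.Affine.negAddY,
        WeierstrassCurve.Affine.negY, WeierstrassCurve.Affine.addX, hsl3]
      simp only [hW, Wshort]; ring
  -- Q3 + P = Q4
  have hxne31 : (-24 - 12 * ζ : CyclotomicField 3 ℚ) ≠ 12 * (1 - ζ) := by
    intro h
    have : (36 : CyclotomicField 3 ℚ) = 0 := by linear_combination -h
    norm_num at this
  have hsl4 : W.slope (-24 - 12 * ζ) (12 * (1 - ζ)) (108 * ζ) (-108 * ζ) = -6 * ζ := by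
    rw [WeierstrassCurve.Affine.slope_of_X_ne hxne31]
    have hden : (-24 - 12 * ζ - 12 * (1 - ζ) : CyclotomicField 3 ℚ) ≠ 0 := by
      intro h
      have h36 : (36 : CyclotomicField 3 ℚ) = 0 := by linear_combination -h
      norm_num at h36
    rw [div_eq_iff hden]
    ring
  have e4 : Q3 + P = Q4 := by
    rw [hP, hQ3, hQ4, WeierstrassCurve.Affine.Point.add_of_X_ne hxne31]
    refine some_congr' _ _ ?_ ?_
    · rw [WeierstrassCurve.Affine.addX, hsl4]
      simp only [hW, Wshort]
      linear_combination 36 * hrel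
    · rw [WeierstrassCurve.Affine.addY, WeierstrassCurve.Affine.negAddY,
        WeierstrassCurve.Affine.negY, WeierstrassCurve.Affine.addX, hsl4]
      simp only [hW, Wshort]
      linear_combination 216 * ζ * hrel
  -- Q3 + Q4 = 0
  have e0 : Q3 + Q4 = 0 := by
    rw [hQ3, hQ4]
    refine WeierstrassCurve.Affine.Point.add_of_Y_eq rfl ?_
    simp only [hW, Wshort, WeierstrassCurve.Affine.negY]
    ring
  have h7 : (7 : ℕ) • P = 0 := by
    have : (7 : ℕ) • P = (P + P + P) + ((P + P + P) + P) := by abel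
    rw [this, e2, e3, e4, e0]
  have hP0 : P ≠ 0 := WeierstrassCurve.Affine.Point.some_ne_zero h1
  haveI : Fact (Nat.Prime 7) := ⟨by norm_num⟩
  exact addOrderOf_eq_prime h7 hP0
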